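/- Let T : ω → ω be a continuous linear operator with matrix (a_{i,j})_{i,j≥0}, and let c_i be the smallest index such that a_{i,j} = 0 for all j ≥ c_i. If c_i > i+1 for every i ≥ 0 and c_i ≠ c_j whenever i ≠ j, then T possesses a hypercyclic subspace. -/

import Mathlib

open Filter Topology

namespace HCAux

variable {𝕜 : Type*} [RCLike 𝕜]

/-- Finite dependence of coordinates of a continuous linear operator on `ω`. -/
lemma findep (S : (ℕ → 𝕜) →L[𝕜] (ℕ → 𝕜)) (i : ℕ) :
    ∃ b : ℕ, ∀ x : ℕ → 𝕜, (∀ j, j < b → x j = 0) → S x i = 0 := by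
  have hcont : Continuous fun x : ℕ → 𝕜 => S x i := (continuous_apply i).comp S.continuous
  have h0 : Tendsto (fun x : ℕ → 𝕜 => S x i) (𝓝 0) (𝓝 0) := by
    simpa using hcont.tendsto 0
  have hball : {x : ℕ → 𝕜 | ‖S x i‖ < 1} ∈ 𝓝 (0 : ℕ → 𝕜) := by
    have h1 : Metric.ball (0:𝕜) 1 ∈ 𝓝 (0:𝕜) := Metric.ball_mem_nhds _ one_pos
    have := h0 h1
    rw [Filter.mem_map] at this
    convert this using 1
    ext x
    simp [Metric.mem_ball, dist_zero_right]
  rw [nhds_pi, Filter.mem_pi] at hball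
  obtain ⟨I, hIfin, V, hV, hVsub⟩ := hball
  obtain ⟨b, hb⟩ : ∃ b : ℕ, ∀ j ∈ I, j < b := by
    obtain ⟨b, hb⟩ := hIfin.bddAbove
    exact ⟨b + 1, fun j hj => Nat.lt_succ_of_le (hb hj)⟩
  refine ⟨b, fun x hx => ?_⟩
  have key : ∀ r : 𝕜, ‖r‖ * ‖S x i‖ < 1 := by
    intro r
    have hmem : r • x ∈ Set.pi I V := by
      intro j hj
      have hx0 : (r • x) j = 0 := by simp [hx j (hb j hj)]
      rw [hx0]
      exact mem_of_mem_nhds (hV j)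
    have := hVsub hmem
    simpa [norm_smul] using this
  by_contra hne
  have hpos : 0 < ‖S x i‖ := norm_pos_iff.mpr hne
  obtain ⟨n, hn⟩ := exists_nat_gt (1 / ‖S x i‖)
  have hkey := key (n : 𝕜)
  rw [RCLike.norm_natCast] at hkey
  have : (1:ℝ) / ‖S x i‖ < 1 / ‖S x i‖ := by
    calc (1:ℝ) / ‖S x i‖ < n := hn
    _ ≤ 1 / ‖S x i‖ := by
        rw [le_div_iff₀ hpos]; linarith
  exact lt_irrefl _ this

/-- A bound valid for all coordinates `< m` of `S`. -/
noncomputable def opBnd (S : (ℕ → 𝕜) →L[𝕜] (ℕ → 𝕜)) (m : ℕ) : ℕ :=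
  (Finset.range m).sup fun i => Classical.choose (findep S i)

lemma opBnd_spec (S : (ℕ → 𝕜) →L[𝕜] (ℕ → 𝕜)) {m i : ℕ} (hi : i < m) {x y : ℕ → 𝕜}
    (hxy : ∀ j, j < opBnd S m → x j = y j) : S x i = S y i := by
  have hb : Classical.choose (findep S i) ≤ opBnd S m :=
    Finset.le_sup (f := fun i => Classical.choose (findep S i)) (Finset.mem_range.mpr hi)
  have h := Classical.choose_spec (findep S i) (x - y) (fun j hj => by
    simp [Pi.sub_apply, hxy j (lt_of_lt_of_le hj hb)])
  have hsub : S (x - y) i = S x i - S y i := by rw [map_sub]; rfl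
  rw [hsub] at h
  exact sub_eq_zero.mp h

lemma pi_single_sum {m : ℕ} (x : Fin m → 𝕜) : x = ∑ i, x i • (Pi.single i 1 : Fin m → 𝕜) := by
  funext j
  rw [Finset.sum_apply, Finset.sum_eq_single j]
  · simp
  · intro i _ hij
    simp [Pi.single_apply, hij]
  · intro h; exact absurd (Finset.mem_univ j) h

section Rows

variable (T : (ℕ → 𝕜) →L[𝕜] (ℕ → 𝕜)) (c : ℕ → ℕ)

/-- Matrix entry of `T`. -/
noncomputable def matA (i j : ℕ) : 𝕜 := T (Pi.single j 1) i

/-- Row formula for `T`. -/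
lemma row_formula (hc : ∀ i, IsLeast {m : ℕ | ∀ j, m ≤ j → T (Pi.single j 1) i = 0} (c i))
    (i : ℕ) : ∃ b, c i ≤ b ∧
    ∀ x : ℕ → 𝕜, T x i = ∑ j ∈ Finset.range b, matA T i j * x j := by
  obtain ⟨b0, hb0⟩ := findep T i
  refine ⟨max b0 (c i), le_max_right _ _, fun x => ?_⟩
  set b := max b0 (c i) with hbdef
  set y : ℕ → 𝕜 := fun j => if j < b then x j else 0 with hy
  have hyx : y = ∑ j ∈ Finset.range b, x j • (Pi.single j 1 : ℕ → 𝕜) := by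
    funext j
    rw [Finset.sum_apply]
    by_cases hj : j < b
    · rw [Finset.sum_eq_single j]
      · simp [hy, hj, Pi.single_apply]
      · intro k _ hk
        simp [Pi.single_apply, hk]
      · intro hj'
        exact absurd (Finset.mem_range.mpr hj) (fun h => hj' h)
    · rw [Finset.sum_eq_zero]
      · simp [hy, hj]
      · intro k hk
        have : k ≠ j := by
          intro h; exact hj (h ▸ Finset.mem_range.mp hk)
        simp [Pi.single_apply, this]
  have hz : T (x - y) i = 0 := by
    apply hb0
    intro j hj
    have : j < b := lt_of_lt_of_le hj (le_max_left _ _)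
    simp [hy, this]
  have hxy : T x i = T y i := by
    have h' : T (x - y) i = T x i - T y i := by rw [map_sub]; rfl
    rw [h'] at hz; exact sub_eq_zero.mp hz
  rw [hxy, hyx, map_sum]
  rw [Finset.sum_apply]
  apply Finset.sum_congr rfl
  intro j hj
  rw [map_smul]
  simp [matA, mul_comm]

/-- the `i`-th row of the matrix of `T` as a finitely supported function. -/
noncomputable def rowF (hc : ∀ i, IsLeast {m : ℕ | ∀ j, m ≤ j → T (Pi.single j 1) i = 0} (c i))
    (i : ℕ) : ℕ →₀ 𝕜 :=
  Finsupp.onFinset (Finset.range (c i)) (matA T i) (by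
    intro j hj
    rw [Finset.mem_range]
    by_contra h
    exact hj ((hc i).1 j (le_of_not_gt h)))

variable (hc : ∀ i, IsLeast {m : ℕ | ∀ j, m ≤ j → T (Pi.single j 1) i = 0} (c i))

/-- One step of the transpose action on finitely supported functionals. -/
noncomputable def stepF (lam : ℕ →₀ 𝕜) : ℕ →₀ 𝕜 := lam.sum fun i a => a • rowF T c hc i

lemma rowF_eval (i : ℕ) (x : ℕ → 𝕜) :
    Finsupp.linearCombination 𝕜 x (rowF T c hc i) = T x i := by
  obtain ⟨b, hbc, hb⟩ := row_formula T c hc i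
  rw [Finsupp.linearCombination_apply, hb x,
    Finsupp.sum_of_support_subset _ (s := Finset.range b) ?_ _ (by intros; simp)]
  · exact Finset.sum_congr rfl fun j _ => by simp [rowF, smul_eq_mul, mul_comm]
  · intro j hj
    have := Finsupp.support_onFinset_subset hj
    exact Finset.mem_range.mpr (lt_of_lt_of_le (Finset.mem_range.mp this) hbc)

lemma pairing_step (lam : ℕ →₀ 𝕜) (x : ℕ → 𝕜) :
    Finsupp.linearCombination 𝕜 (T x) lam = Finsupp.linearCombination 𝕜 x (stepF T c hc lam) := by
  rw [stepF, map_finsuppSum, Finsupp.linearCombination_apply]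
  apply Finsupp.sum_congr
  intro i _
  rw [map_smul, rowF_eval, smul_eq_mul]

lemma pairing_pow (N : ℕ) (lam : ℕ →₀ 𝕜) (x : ℕ → 𝕜) :
    Finsupp.linearCombination 𝕜 ((T ^ N) x) lam
      = Finsupp.linearCombination 𝕜 x ((stepF T c hc)^[N] lam) := by
  induction N generalizing x with
  | zero => simp
  | succ N ih =>
      have h1 : (T ^ (N+1)) x = (T ^ N) (T x) := by
        rw [pow_succ]; rfl
      rw [h1, ih, pairing_step T c hc, Function.iterate_succ_apply']

variable (h1 : ∀ i, i + 1 < c i) (h2 : Function.Injective c)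

include hc h1 in
lemma diag_ne_zero (i : ℕ) : matA T i (c i - 1) ≠ 0 := by
  intro h0
  have hmem : c i - 1 ∈ {m : ℕ | ∀ j, m ≤ j → T (Pi.single j 1) i = 0} := by
    intro j hj
    rcases eq_or_lt_of_le hj with h | h
    · rw [← h]; exact h0
    · exact (hc i).1 j (by omega)
  have := (hc i).2 hmem
  have := h1 i
  omega

include h1 h2 hc in
lemma step_growth (lam : ℕ →₀ 𝕜) (hlam : lam ≠ 0) :
    ∃ j ∈ (stepF T c hc lam).support, ∀ i ∈ lam.support, i + 1 ≤ j := by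
  classical
  have hne : lam.support.Nonempty := Finsupp.support_nonempty_iff.mpr hlam
  obtain ⟨i₀, hi₀mem, hi₀max⟩ := lam.support.exists_max_image (fun i => c i - 1) hne
  set j := c i₀ - 1 with hjdef
  have hd_inj : ∀ i, i ∈ lam.support → i ≠ i₀ → c i - 1 < j := by
    intro i hi hne'
    have h := hi₀max i hi
    rcases lt_or_eq_of_le h with h | h
    · exact h
    · exfalso
      have h1i := h1 i; have h1i0 := h1 i₀
      have : c i = c i₀ := by omega
      exact hne' (h2 this)
  have heval : (stepF T c hc lam) j = lam i₀ * matA T i₀ j := by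
    rw [stepF, Finsupp.sum_apply, Finsupp.sum]
    rw [Finset.sum_eq_single_of_mem i₀ hi₀mem]
    · simp [rowF, smul_eq_mul]
    · intro i hi hne'
      have hlt : c i - 1 < j := hd_inj i hi hne'
      have : c i ≤ j := by have := h1 i; omega
      have hz : matA T i j = 0 := (hc i).1 j this
      simp [rowF, hz]
  have hnz : (stepF T c hc lam) j ≠ 0 := by
    rw [heval]
    exact mul_ne_zero (Finsupp.mem_support_iff.mp hi₀mem) (diag_ne_zero T c hc h1 i₀)
  refine ⟨j, Finsupp.mem_support_iff.mpr hnz, fun i hi => ?_⟩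
  have := hi₀max i hi
  have := h1 i
  omega

include h1 h2 in
lemma iterate_growth (N : ℕ) (lam : ℕ →₀ 𝕜) (hlam : lam ≠ 0) :
    ∃ j ∈ ((stepF T c hc)^[N] lam).support, N ≤ j := by
  induction N with
  | zero =>
      obtain ⟨j, hj⟩ := Finsupp.support_nonempty_iff.mpr hlam
      exact ⟨j, by simpa using hj, Nat.zero_le j⟩
  | succ N ih =>
      obtain ⟨j, hjmem, hjge⟩ := ih
      have hne : (stepF T c hc)^[N] lam ≠ 0 :=
        fun h => by simp [h] at hjmem
      obtain ⟨j', hj'mem, hj'⟩ := step_growth T c hc h1 h2 _ hne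
      refine ⟨j', by rw [Function.iterate_succ_apply']; exact hj'mem, ?_⟩
      have := hj' j hjmem
      omega

include hc h1 h2 in
/-- Solvability: we can realize any prescribed values of the first `m` coordinates of `T ^ N`
applied to a finitely supported vector avoiding small indices and a finite forbidden set. -/
lemma solver (m L N : ℕ) (F : Finset ℕ) (hNL : L ≤ N) (hNF : ∀ a ∈ F, a < N) (y : ℕ → 𝕜) :
    ∃ v : ℕ →₀ 𝕜, (∀ j ∈ v.support, L ≤ j ∧ j ∉ F) ∧ ∀ i, i < m → (T ^ N) ↑v i = y i := by
  classical
  set G : (ℕ →₀ 𝕜) →ₗ[𝕜] (Fin m → 𝕜) :=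
    { toFun := fun v => fun i => (T ^ N) ↑v (i : ℕ)
      map_add' := by intro v w; funext i; simp
      map_smul' := by intro a v; funext i; simp }
  set s : Set ℕ := {j | L ≤ j ∧ j ∉ F} with hs
  set P : Submodule 𝕜 (ℕ →₀ 𝕜) := Finsupp.supported 𝕜 𝕜 s
  have htop : P.map G = ⊤ := by
    by_contra hne
    have hlt : P.map G < ⊤ := lt_top_iff_ne_top.mpr hne
    obtain ⟨f, hf0, hfbot⟩ := Submodule.exists_dual_map_eq_bot_of_lt_top hlt inferInstance
    have hfP : ∀ v ∈ P, f (G v) = 0 := by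
      intro v hv
      have : f (G v) ∈ (P.map G).map f :=
        Submodule.mem_map_of_mem (Submodule.mem_map_of_mem hv)
      rw [hfbot] at this
      exact (Submodule.mem_bot 𝕜).mp this
    set lam : ℕ →₀ 𝕜 := Finsupp.onFinset (Finset.range m)
      (fun j => if h : j < m then f (Pi.single (⟨j, h⟩ : Fin m) 1) else 0)
      (by intro j hj; rw [Finset.mem_range]; by_contra h; simp [h] at hj) with hlam
    have hlamne : lam ≠ 0 := by
      intro h0
      apply hf0
      ext x
      have hx : f (Pi.single x 1) = 0 := by
        have := congrArg (fun g : ℕ →₀ 𝕜 => g (x : ℕ)) h0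
        simpa [hlam, x.isLt] using this
      simpa using hx
    have hkey : ∀ v : ℕ →₀ 𝕜, f (G v) = Finsupp.linearCombination 𝕜 ((T ^ N) ↑v) lam := by
      intro v
      rw [Finsupp.linearCombination_apply,
        Finsupp.sum_of_support_subset _ (Finsupp.support_onFinset_subset) _ (by intros; simp)]
      have : f (G v) = ∑ i : Fin m, (G v) i * f (Pi.single i 1) := by
        conv_lhs => rw [pi_single_sum (G v), map_sum]
        exact Finset.sum_congr rfl fun i _ => by rw [map_smul]; simp [smul_eq_mul]
      rw [this, Finset.sum_range]
      apply Finset.sum_congr rfl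
      intro i _
      simp only [hlam, Finsupp.onFinset_apply]
      rw [dif_pos i.isLt]
      simp only [smul_eq_mul, G]
      rw [mul_comm]
      congr
    obtain ⟨j', hj'mem, hj'ge⟩ := iterate_growth T c hc h1 h2 N lam hlamne
    have hv : (Finsupp.single j' (1:𝕜)) ∈ P := by
      rw [Finsupp.mem_supported]
      intro a ha
      have : a = j' := by
        have := Finsupp.support_single_subset ha
        simpa using this
      subst this
      exact ⟨le_trans hNL hj'ge, fun hF => absurd hj'ge (by have := hNF a hF; omega)⟩
    have h0 := hfP _ hv
    rw [hkey, pairing_pow, Finsupp.linearCombination_apply] at h0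
    rw [Finsupp.sum, Finset.sum_eq_single_of_mem j' hj'mem] at h0
    · apply Finsupp.mem_support_iff.mp hj'mem
      simpa using h0
    · intro b _ hbj
      simp [Finsupp.single_apply, Ne.symm hbj]
  have hy : (fun i : Fin m => y i) ∈ P.map G := htop ▸ Submodule.mem_top
  obtain ⟨v, hvP, hvG⟩ := hy
  refine ⟨v, fun j hj => (Finsupp.mem_supported 𝕜 v).mp hvP hj, fun i hi => ?_⟩
  have := congrArg (fun g : Fin m → 𝕜 => g ⟨i, hi⟩) hvG
  simpa [G] using this

end Rows


section Construction

variable (T : (ℕ → 𝕜) →L[𝕜] (ℕ → 𝕜)) (c : ℕ → ℕ)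
variable (hc : ∀ i, IsLeast {m : ℕ | ∀ j, m ≤ j → T (Pi.single j 1) i = 0} (c i))
variable (h1 : ∀ i, i + 1 < c i) (h2 : Function.Injective c)
variable (E : ℕ ≃ ℕ × ℕ × ℕ × ℕ) (g : ℕ → (ℕ → 𝕜))

/-- requirement data: which basis vector -/
def rS (k : ℕ) : ℕ := (E k).2.1
/-- requirement data: how many coordinates -/
def rM (k : ℕ) : ℕ := (E k).2.2.1
/-- requirement data: index of target -/
def rD (k : ℕ) : ℕ := (E k).2.2.2
/-- requirement data: target -/
noncomputable def rQ (k : ℕ) : ℕ → 𝕜 := g (rD E k)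

end Construction

/-- data of one step of the construction: `(L, μ, n, v)`. -/
abbrev DataT (𝕜 : Type*) [RCLike 𝕜] := ℕ × ℕ × ℕ × (ℕ → ℕ →₀ 𝕜)

/-- lower bound for supports -/
def dL (d : DataT 𝕜) : ℕ := d.1
/-- marker coordinate -/
def dM (d : DataT 𝕜) : ℕ := d.2.1
/-- iteration time -/
def dN (d : DataT 𝕜) : ℕ := d.2.2.1
/-- new blocks -/
def dV (d : DataT 𝕜) : ℕ → ℕ →₀ 𝕜 := d.2.2.2

section Construction2

variable (T : (ℕ → 𝕜) →L[𝕜] (ℕ → 𝕜)) (c : ℕ → ℕ)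
variable (hc : ∀ i, IsLeast {m : ℕ | ∀ j, m ≤ j → T (Pi.single j 1) i = 0} (c i))
variable (h1 : ∀ i, i + 1 < c i) (h2 : Function.Injective c)
variable (E : ℕ ≃ ℕ × ℕ × ℕ × ℕ) (g : ℕ → (ℕ → 𝕜))

/-- the invariant satisfied at each step of the construction. -/
def Props (k : ℕ) (hist : ℕ → DataT 𝕜) (d : DataT 𝕜) : Prop :=
  (k ≤ dL d) ∧
  (∀ j, j < k → opBnd (T ^ dN (hist j)) (rM E j) ≤ dL d) ∧
  (dL d ≤ dM d) ∧
  (∀ j, j < k → dM (hist j) < dM d) ∧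
  (∀ j, j < k → ∀ t, t ≤ j → ∀ x ∈ (dV (hist j) t).support, x < dM d) ∧
  (dM d < dN d) ∧
  (∀ t, k < t → dV d t = 0) ∧
  (∀ t x, x ∈ (dV d t).support → dL d ≤ x ∧ (∀ j, j < k → x ≠ dM (hist j)) ∧ x ≠ dM d) ∧
  (∀ t, t ≤ k → ∀ i, i < rM E k →
    (T ^ dN d) (((Pi.single (if t = k then dM d else dM (hist t)) (1:𝕜) : ℕ → 𝕜)
      + ∑ j ∈ Finset.range k, ↑(dV (hist j) t)) + ↑(dV d t)) i
      = (if t = rS E k then rQ E g k i else 0))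

include hc h1 h2 in
lemma stepExists (k : ℕ) (hist : ℕ → DataT 𝕜) : ∃ d : DataT 𝕜, Props T E g k hist d := by
  classical
  set Lv := max k ((Finset.range k).sup fun j => opBnd (T ^ dN (hist j)) (rM E j)) with hLv
  set inner : ℕ → ℕ := fun j => max (dM (hist j) + 1)
    (((Finset.range (j+1)).sup fun t => (dV (hist j) t).support.sup id) + 1) with hinner
  set Mv := max Lv ((Finset.range k).sup inner) with hMv
  set Nv := Mv + 1 with hNv
  set μof : ℕ → ℕ := fun t => if t = k then Mv else dM (hist t) with hμof
  set Fb : Finset ℕ := (Finset.range (k+1)).image μof with hFb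
  have hLM : Lv ≤ Mv := le_max_left _ _
  have hLN : Lv ≤ Nv := by omega
  have hinnerM : ∀ j, j < k → inner j ≤ Mv := by
    intro j hj
    exact le_trans (Finset.le_sup (Finset.mem_range.mpr hj)) (le_max_right _ _)
  have hFbN : ∀ a ∈ Fb, a < Nv := by
    intro a ha
    rw [hFb, Finset.mem_image] at ha
    obtain ⟨j, hj, rfl⟩ := ha
    rw [Finset.mem_range] at hj
    by_cases hjk : j = k
    · simp [hμof, hjk, hNv]
    · have hjk' : j < k := by omega
      have : dM (hist j) + 1 ≤ inner j := le_max_left _ _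
      have := hinnerM j hjk'
      simp only [hμof, if_neg hjk]
      omega
  set base : ℕ → ℕ → 𝕜 := fun t =>
    (Pi.single (μof t) (1:𝕜) : ℕ → 𝕜) + ∑ j ∈ Finset.range k, ↑(dV (hist j) t) with hbase
  set y : ℕ → ℕ → 𝕜 := fun t i =>
    (if t = rS E k then rQ E g k i else 0) - (T ^ Nv) (base t) i with hy
  set vv : ℕ → ℕ →₀ 𝕜 := fun t => if t ≤ k then
    (solver T c hc h1 h2 (rM E k) Lv Nv Fb hLN hFbN (y t)).choose else 0 with hvv
  refine ⟨(Lv, Mv, Nv, vv), ?_, ?_, ?_, ?_, ?_, ?_, ?_, ?_, ?_⟩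
  · show k ≤ Lv
    exact le_max_left _ _
  · intro j hj
    show opBnd (T ^ dN (hist j)) (rM E j) ≤ Lv
    exact le_trans (Finset.le_sup (f := fun j => opBnd (T ^ dN (hist j)) (rM E j))
      (Finset.mem_range.mpr hj)) (le_max_right _ _)
  · exact hLM
  · intro j hj
    have : dM (hist j) + 1 ≤ inner j := le_max_left _ _
    have := hinnerM j hj
    show dM (hist j) < Mv
    omega
  · intro j hj t ht x hx
    have hx1 : x ≤ (dV (hist j) t).support.sup id := Finset.le_sup (f := id) hx
    have hx2 : (dV (hist j) t).support.sup id
        ≤ (Finset.range (j+1)).sup fun t => (dV (hist j) t).support.sup id :=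
      Finset.le_sup (f := fun t => (dV (hist j) t).support.sup id)
        (Finset.mem_range.mpr (by omega))
    have : ((Finset.range (j+1)).sup fun t => (dV (hist j) t).support.sup id) + 1 ≤ inner j :=
      le_max_right _ _
    have := hinnerM j hj
    show x < Mv
    omega
  · show Mv < Nv; omega
  · intro t ht
    show vv t = 0
    rw [hvv]
    simp only
    rw [if_neg (by omega)]
  · intro t x hx
    show Lv ≤ x ∧ (∀ j, j < k → x ≠ dM (hist j)) ∧ x ≠ Mv
    by_cases ht : t ≤ k
    · have hx' : x ∈ ((solver T c hc h1 h2 (rM E k) Lv Nv Fb hLN hFbN (y t)).choose).support := by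
        have : vv t = (solver T c hc h1 h2 (rM E k) Lv Nv Fb hLN hFbN (y t)).choose := by
          rw [hvv]; simp only; rw [if_pos ht]
        rwa [show dV (Lv, Mv, Nv, vv) t = vv t from rfl, this] at hx
      obtain ⟨hxL, hxF⟩ :=
        (solver T c hc h1 h2 (rM E k) Lv Nv Fb hLN hFbN (y t)).choose_spec.1 x hx'
      refine ⟨hxL, ?_, ?_⟩
      · intro j hj hne
        apply hxF
        rw [hFb, Finset.mem_image]
        exact ⟨j, Finset.mem_range.mpr (by omega), by simp [hμof, hne, show j ≠ k by omega]⟩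
      · intro hne
        apply hxF
        rw [hFb, Finset.mem_image]
        exact ⟨k, Finset.mem_range.mpr (by omega), by simp [hμof, hne]⟩
    · exfalso
      have : vv t = 0 := by rw [hvv]; simp only; rw [if_neg ht]
      rw [show dV (Lv, Mv, Nv, vv) t = vv t from rfl, this] at hx
      simp at hx
  · intro t ht i hi
    have hvt : vv t = (solver T c hc h1 h2 (rM E k) Lv Nv Fb hLN hFbN (y t)).choose := by
      rw [hvv]; simp only; rw [if_pos ht]
    have hsol := (solver T c hc h1 h2 (rM E k) Lv Nv Fb hLN hFbN (y t)).choose_spec.2 i hi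
    show (T ^ Nv) (base t + ↑(vv t)) i = _
    rw [map_add]
    have : (T ^ Nv) (base t) i + (T ^ Nv) (↑(vv t) : ℕ → 𝕜) i
        = (T ^ Nv) (base t) i + y t i := by
      rw [hvt, hsol]
    calc ((T ^ Nv) (base t) + (T ^ Nv) (↑(vv t) : ℕ → 𝕜)) i
        = (T ^ Nv) (base t) i + (T ^ Nv) (↑(vv t) : ℕ → 𝕜) i := rfl
      _ = (T ^ Nv) (base t) i + y t i := this
      _ = (if t = rS E k then rQ E g k i else 0) := by rw [hy]; simp only; ring

/-- the full history of the construction up to step `k` (recursive). -/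
noncomputable def Hrec : ℕ → ℕ → DataT 𝕜
  | 0 => fun _ => (0, 0, 0, fun _ => 0)
  | (k+1) => Function.update (Hrec k) k
      (stepExists T c hc h1 h2 E g k (Hrec k)).choose

/-- the data of step `k` of the construction. -/
noncomputable def FD (k : ℕ) : DataT 𝕜 := Hrec T c hc h1 h2 E g (k+1) k

lemma FD_eq (k : ℕ) :
    FD T c hc h1 h2 E g k = (stepExists T c hc h1 h2 E g k (Hrec T c hc h1 h2 E g k)).choose := by
  show Hrec T c hc h1 h2 E g (k+1) k = _
  rw [Hrec, Function.update_self]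

lemma Hrec_eq {j k : ℕ} (h : j < k) :
    Hrec T c hc h1 h2 E g k j = FD T c hc h1 h2 E g j := by
  induction k with
  | zero => omega
  | succ k ih =>
      by_cases hjk : j = k
      · subst hjk
        rw [Hrec, Function.update_self, ← FD_eq]
      · rw [Hrec, Function.update_of_ne hjk]
        exact ih (by omega)

lemma FD_props (k : ℕ) :
    Props T E g k (Hrec T c hc h1 h2 E g k) (FD T c hc h1 h2 E g k) := by
  rw [FD_eq]
  exact (stepExists T c hc h1 h2 E g k (Hrec T c hc h1 h2 E g k)).choose_spec

end Construction2


section Construction3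

variable (T : (ℕ → 𝕜) →L[𝕜] (ℕ → 𝕜)) (c : ℕ → ℕ)
variable (hc : ∀ i, IsLeast {m : ℕ | ∀ j, m ≤ j → T (Pi.single j 1) i = 0} (c i))
variable (h1 : ∀ i, i + 1 < c i) (h2 : Function.Injective c)
variable (E : ℕ ≃ ℕ × ℕ × ℕ × ℕ) (g : ℕ → (ℕ → 𝕜))

lemma spec1 (k : ℕ) : k ≤ dL (FD T c hc h1 h2 E g k) := (FD_props T c hc h1 h2 E g k).1

lemma spec2 {j k : ℕ} (h : j < k) :
    opBnd (T ^ dN (FD T c hc h1 h2 E g j)) (rM E j) ≤ dL (FD T c hc h1 h2 E g k) := by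
  have hh := (FD_props T c hc h1 h2 E g k).2.1 j h
  rwa [Hrec_eq T c hc h1 h2 E g h] at hh

lemma spec3 (k : ℕ) : dL (FD T c hc h1 h2 E g k) ≤ dM (FD T c hc h1 h2 E g k) := (FD_props T c hc h1 h2 E g k).2.2.1

lemma spec4 {j k : ℕ} (h : j < k) : dM (FD T c hc h1 h2 E g j) < dM (FD T c hc h1 h2 E g k) := by
  have hh := (FD_props T c hc h1 h2 E g k).2.2.2.1 j h
  rwa [Hrec_eq T c hc h1 h2 E g h] at hh

lemma spec5 {j k : ℕ} (h : j < k) {t : ℕ} (ht : t ≤ j) {x : ℕ}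
    (hx : x ∈ (dV (FD T c hc h1 h2 E g j) t).support) : x < dM (FD T c hc h1 h2 E g k) := by
  apply (FD_props T c hc h1 h2 E g k).2.2.2.2.1 j h t ht x
  rwa [Hrec_eq T c hc h1 h2 E g h]

lemma spec6 (k : ℕ) : dM (FD T c hc h1 h2 E g k) < dN (FD T c hc h1 h2 E g k) := (FD_props T c hc h1 h2 E g k).2.2.2.2.2.1

lemma spec7 {k t : ℕ} (h : k < t) : dV (FD T c hc h1 h2 E g k) t = 0 :=
  (FD_props T c hc h1 h2 E g k).2.2.2.2.2.2.1 t h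

lemma spec8 {k t x : ℕ} (hx : x ∈ (dV (FD T c hc h1 h2 E g k) t).support) :
    dL (FD T c hc h1 h2 E g k) ≤ x ∧ ∀ j, j ≤ k → x ≠ dM (FD T c hc h1 h2 E g j) := by
  obtain ⟨hL, hj, hk⟩ := (FD_props T c hc h1 h2 E g k).2.2.2.2.2.2.2.1 t x hx
  refine ⟨hL, fun j hjk => ?_⟩
  rcases eq_or_lt_of_le hjk with h | h
  · subst h; exact hk
  · have := hj j h
    rwa [Hrec_eq T c hc h1 h2 E g h] at this

lemma spec9 {k t : ℕ} (ht : t ≤ k) {i : ℕ} (hi : i < rM E k) :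
    (T ^ dN (FD T c hc h1 h2 E g k)) ((Pi.single (dM (FD T c hc h1 h2 E g t)) (1:𝕜) : ℕ → 𝕜)
      + ∑ j ∈ Finset.range (k+1), ↑(dV (FD T c hc h1 h2 E g j) t)) i
    = (if t = rS E k then rQ E g k i else 0) := by
  have h9 := (FD_props T c hc h1 h2 E g k).2.2.2.2.2.2.2.2 t ht i hi
  have hμ : (if t = k then dM (FD T c hc h1 h2 E g k)
      else dM (Hrec T c hc h1 h2 E g k t)) = dM (FD T c hc h1 h2 E g t) := by
    by_cases htk : t = k
    · subst htk; rw [if_pos rfl]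
    · rw [if_neg htk, Hrec_eq T c hc h1 h2 E g (lt_of_le_of_ne ht htk)]
  rw [hμ] at h9
  have hsum : (∑ j ∈ Finset.range k, ↑(dV (Hrec T c hc h1 h2 E g k j) t) : ℕ → 𝕜)
      = ∑ j ∈ Finset.range k, ↑(dV (FD T c hc h1 h2 E g j) t) :=
    Finset.sum_congr rfl fun j hj => by rw [Hrec_eq T c hc h1 h2 E g (Finset.mem_range.mp hj)]
  rw [hsum] at h9
  rw [Finset.sum_range_succ, ← add_assoc]
  exact h9

lemma le_mu (k : ℕ) : k ≤ dM (FD T c hc h1 h2 E g k) := le_trans (spec1 T c hc h1 h2 E g k) (spec3 T c hc h1 h2 E g k)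

lemma mu_inj : Function.Injective fun k => dM (FD T c hc h1 h2 E g k) := by
  intro a b hab
  by_contra hne
  rcases Nat.lt_or_ge a b with h | h
  · exact absurd hab (Nat.ne_of_lt (spec4 T c hc h1 h2 E g h))
  · have hlt : b < a := by omega
    exact absurd hab.symm (Nat.ne_of_lt (spec4 T c hc h1 h2 E g hlt))

lemma block_supp {j t x : ℕ} (hx : x ∈ (dV (FD T c hc h1 h2 E g j) t).support) :
    dL (FD T c hc h1 h2 E g j) ≤ x ∧ t ≤ j ∧ ∀ k', x ≠ dM (FD T c hc h1 h2 E g k') := by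
  have ht : t ≤ j := by
    by_contra h
    rw [spec7 T c hc h1 h2 E g (by omega)] at hx
    simp at hx
  refine ⟨(spec8 T c hc h1 h2 E g hx).1, ht, fun k' => ?_⟩
  rcases le_or_gt k' j with h | h
  · exact (spec8 T c hc h1 h2 E g hx).2 k' h
  · exact Nat.ne_of_lt (spec5 T c hc h1 h2 E g h ht hx)

/-- the basis vectors of the hypercyclic subspace. -/
noncomputable def uu (t : ℕ) : ℕ → 𝕜 := fun x =>
  (Pi.single (dM (FD T c hc h1 h2 E g t)) (1:𝕜) : ℕ → 𝕜) x
    + ∑ j ∈ Finset.range (x+1), dV (FD T c hc h1 h2 E g j) t x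

lemma block_apply_zero {j t x : ℕ} (h : x < dL (FD T c hc h1 h2 E g j)) : dV (FD T c hc h1 h2 E g j) t x = 0 := by
  by_contra hne
  have := (block_supp T c hc h1 h2 E g (Finsupp.mem_support_iff.mpr hne)).1
  omega

lemma block_apply_zero' {j t x : ℕ} (h : j < t) : dV (FD T c hc h1 h2 E g j) t x = 0 := by
  rw [spec7 T c hc h1 h2 E g h]; rfl

lemma uu_eq_zero {t x : ℕ} (h : x < t) : uu T c hc h1 h2 E g t x = 0 := by
  simp only [uu]
  have hμ : x ≠ dM (FD T c hc h1 h2 E g t) := by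
    have := le_mu T c hc h1 h2 E g t
    omega
  rw [Pi.single_eq_of_ne hμ]
  rw [Finset.sum_eq_zero, add_zero]
  intro j hj
  rw [Finset.mem_range] at hj
  exact block_apply_zero' T c hc h1 h2 E g (by omega)

lemma uu_sum_ext {t x r : ℕ} (h : x + 1 ≤ r) :
    uu T c hc h1 h2 E g t x = (Pi.single (dM (FD T c hc h1 h2 E g t)) (1:𝕜) : ℕ → 𝕜) x
      + ∑ j ∈ Finset.range r, dV (FD T c hc h1 h2 E g j) t x := by
  simp only [uu]
  congr 1
  apply Finset.sum_subset (Finset.range_subset_range.mpr h)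
  intro j hj hj'
  rw [Finset.mem_range] at hj hj'
  apply block_apply_zero T c hc h1 h2 E g
  have := spec1 T c hc h1 h2 E g j
  omega

lemma uu_marker (t t' : ℕ) : uu T c hc h1 h2 E g t (dM (FD T c hc h1 h2 E g t')) = if t = t' then 1 else 0 := by
  simp only [uu]
  have hb : ∀ j, dV (FD T c hc h1 h2 E g j) t (dM (FD T c hc h1 h2 E g t')) = 0 := by
    intro j
    by_contra hne
    exact absurd rfl ((block_supp T c hc h1 h2 E g (Finsupp.mem_support_iff.mpr hne)).2.2 t')
  rw [Finset.sum_eq_zero (fun j _ => hb j), add_zero]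
  by_cases htt : t = t'
  · subst htt; rw [if_pos rfl, Pi.single_eq_same]
  · rw [if_neg htt, Pi.single_eq_of_ne]
    intro h
    exact htt (mu_inj T c hc h1 h2 E g h.symm)

lemma uu_partial {k t x : ℕ} (hx : x < opBnd (T ^ dN (FD T c hc h1 h2 E g k)) (rM E k)) :
    uu T c hc h1 h2 E g t x = if t ≤ k then
      ((Pi.single (dM (FD T c hc h1 h2 E g t)) (1:𝕜) : ℕ → 𝕜) x
        + ∑ j ∈ Finset.range (k+1), dV (FD T c hc h1 h2 E g j) t x) else 0 := by
  have hbz : ∀ j, k < j → dV (FD T c hc h1 h2 E g j) t x = 0 := by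
    intro j hj
    apply block_apply_zero T c hc h1 h2 E g
    exact lt_of_lt_of_le hx (spec2 T c hc h1 h2 E g hj)
  by_cases ht : t ≤ k
  · rw [if_pos ht]
    rcases le_or_gt (x + 1) (k + 1) with h | h
    · exact uu_sum_ext T c hc h1 h2 E g h
    · simp only [uu]
      congr 1
      symm
      apply Finset.sum_subset (Finset.range_subset_range.mpr (by omega))
      intro j hj hj'
      rw [Finset.mem_range] at hj hj'
      exact hbz j (by omega)
  · rw [if_neg ht]
    push_neg at ht
    simp only [uu]
    have hμ : x ≠ dM (FD T c hc h1 h2 E g t) := by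
      have h2' : opBnd (T ^ dN (FD T c hc h1 h2 E g k)) (rM E k) ≤ dL (FD T c hc h1 h2 E g t) :=
        spec2 T c hc h1 h2 E g ht
      have := spec3 T c hc h1 h2 E g t
      omega
    rw [Pi.single_eq_of_ne hμ]
    rw [Finset.sum_eq_zero, add_zero]
    intro j hj
    rcases lt_or_ge j t with h | h
    · exact block_apply_zero' T c hc h1 h2 E g h
    · exact hbz j (by omega)

lemma Tpow_uu {k t i : ℕ} (hi : i < rM E k) :
    (T ^ dN (FD T c hc h1 h2 E g k)) (uu T c hc h1 h2 E g t) i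
      = if t ≤ k ∧ t = rS E k then rQ E g k i else 0 := by
  by_cases ht : t ≤ k
  · have heq : (T ^ dN (FD T c hc h1 h2 E g k)) (uu T c hc h1 h2 E g t) i
        = (T ^ dN (FD T c hc h1 h2 E g k)) ((Pi.single (dM (FD T c hc h1 h2 E g t)) (1:𝕜) : ℕ → 𝕜)
            + ∑ j ∈ Finset.range (k+1), ↑(dV (FD T c hc h1 h2 E g j) t)) i := by
      apply opBnd_spec _ hi
      intro j hj
      rw [uu_partial T c hc h1 h2 E g hj, if_pos ht]
      simp [Finset.sum_apply]
    rw [heq, spec9 T c hc h1 h2 E g ht hi]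
    by_cases hts : t = rS E k
    · rw [if_pos hts, if_pos ⟨ht, hts⟩]
    · rw [if_neg hts, if_neg (fun h => hts h.2)]
  · have heq : (T ^ dN (FD T c hc h1 h2 E g k)) (uu T c hc h1 h2 E g t) i = (T ^ dN (FD T c hc h1 h2 E g k)) (0 : ℕ → 𝕜) i := by
      apply opBnd_spec _ hi
      intro j hj
      rw [uu_partial T c hc h1 h2 E g hj, if_neg ht]
      rfl
    rw [heq, map_zero, if_neg (fun h => ht h.1)]
    rfl

end Construction3


section Construction4

variable (T : (ℕ → 𝕜) →L[𝕜] (ℕ → 𝕜)) (c : ℕ → ℕ)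
variable (hc : ∀ i, IsLeast {m : ℕ | ∀ j, m ≤ j → T (Pi.single j 1) i = 0} (c i))
variable (h1 : ∀ i, i + 1 < c i) (h2 : Function.Injective c)
variable (E : ℕ ≃ ℕ × ℕ × ℕ × ℕ) (g : ℕ → (ℕ → 𝕜))

/-- the synthesis map of the hypercyclic subspace. -/
noncomputable def PhiFun (α : ℕ → 𝕜) : ℕ → 𝕜 := fun x =>
  ∑ t ∈ Finset.range (x+1), α t * uu T c hc h1 h2 E g t x

lemma Phi_ext (α : ℕ → 𝕜) {x r : ℕ} (h : x + 1 ≤ r) :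
    PhiFun T c hc h1 h2 E g α x = ∑ t ∈ Finset.range r, α t * uu T c hc h1 h2 E g t x := by
  simp only [PhiFun]
  apply Finset.sum_subset (Finset.range_subset_range.mpr h)
  intro t htr ht
  rw [Finset.mem_range] at htr ht
  rw [uu_eq_zero T c hc h1 h2 E g (by omega), mul_zero]

lemma Phi_mu (α : ℕ → 𝕜) (t : ℕ) : PhiFun T c hc h1 h2 E g α (dM (FD T c hc h1 h2 E g t)) = α t := by
  rw [Phi_ext T c hc h1 h2 E g α (r := max (dM (FD T c hc h1 h2 E g t) + 1) (t+1)) (le_max_left _ _)]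
  rw [Finset.sum_eq_single_of_mem t (Finset.mem_range.mpr (by
    have := le_max_right (dM (FD T c hc h1 h2 E g t) + 1) (t+1); omega))]
  · rw [uu_marker T c hc h1 h2 E g, if_pos rfl, mul_one]
  · intro b _ hbt
    rw [uu_marker T c hc h1 h2 E g, if_neg hbt, mul_zero]

/-- the hypercyclic subspace. -/
noncomputable def Msub : Submodule 𝕜 (ℕ → 𝕜) where
  carrier := {x | ∀ jj, x jj = ∑ t ∈ Finset.range (jj+1), x (dM (FD T c hc h1 h2 E g t)) * uu T c hc h1 h2 E g t jj}
  add_mem' := by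
    intro a b ha hb
    intro jj
    rw [Pi.add_apply, ha jj, hb jj, ← Finset.sum_add_distrib]
    apply Finset.sum_congr rfl
    intro t _
    rw [Pi.add_apply, add_mul]
  zero_mem' := by intro jj; simp
  smul_mem' := by
    intro r a ha
    intro jj
    rw [Pi.smul_apply, ha jj, smul_eq_mul, Finset.mul_sum]
    apply Finset.sum_congr rfl
    intro t _
    rw [Pi.smul_apply, smul_eq_mul, mul_assoc]

lemma mem_Msub {x : ℕ → 𝕜} : x ∈ Msub T c hc h1 h2 E g ↔
    ∀ jj, x jj = ∑ t ∈ Finset.range (jj+1), x (dM (FD T c hc h1 h2 E g t)) * uu T c hc h1 h2 E g t jj := Iff.rfl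

lemma Msub_closed : IsClosed ((Msub T c hc h1 h2 E g : Submodule 𝕜 (ℕ → 𝕜)) : Set (ℕ → 𝕜)) := by
  have hset : ((Msub T c hc h1 h2 E g : Submodule 𝕜 (ℕ → 𝕜)) : Set (ℕ → 𝕜)) = ⋂ jj, {x : ℕ → 𝕜 |
      x jj = ∑ t ∈ Finset.range (jj+1), x (dM (FD T c hc h1 h2 E g t)) * uu T c hc h1 h2 E g t jj} := by
    ext x
    simp only [Set.mem_iInter, Set.mem_setOf_eq]
    exact mem_Msub T c hc h1 h2 E g
  rw [hset]
  apply isClosed_iInter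
  intro jj
  apply isClosed_eq (continuous_apply jj)
  apply continuous_finset_sum
  intro t _
  exact (continuous_apply (dM (FD T c hc h1 h2 E g t))).mul continuous_const

lemma Phi_mem (α : ℕ → 𝕜) : PhiFun T c hc h1 h2 E g α ∈ Msub T c hc h1 h2 E g := by
  intro jj
  show PhiFun T c hc h1 h2 E g α jj = _
  simp only [Phi_mu T c hc h1 h2 E g]
  rfl

lemma mem_Phi {x : ℕ → 𝕜} (hx : x ∈ Msub T c hc h1 h2 E g) :
    x = PhiFun T c hc h1 h2 E g (fun t => x (dM (FD T c hc h1 h2 E g t))) :=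
  funext fun jj => hx jj

lemma uu_eq_Phi (t : ℕ) : uu T c hc h1 h2 E g t = PhiFun T c hc h1 h2 E g (Pi.single t (1:𝕜)) := by
  funext x
  simp only [PhiFun]
  by_cases htx : t ≤ x
  · rw [Finset.sum_eq_single_of_mem t (Finset.mem_range.mpr (by omega))]
    · rw [Pi.single_eq_same, one_mul]
    · intro b _ hbt
      rw [Pi.single_eq_of_ne hbt, zero_mul]
  · rw [uu_eq_zero T c hc h1 h2 E g (by omega), Finset.sum_eq_zero]
    intro b hb
    rw [Finset.mem_range] at hb
    rw [Pi.single_eq_of_ne (by omega), zero_mul]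

lemma uu_mem (t : ℕ) : uu T c hc h1 h2 E g t ∈ Msub T c hc h1 h2 E g := by
  rw [uu_eq_Phi T c hc h1 h2 E g]
  exact Phi_mem T c hc h1 h2 E g _

lemma uu_indep : LinearIndependent 𝕜 (fun t => uu T c hc h1 h2 E g t) := by
  rw [linearIndependent_iff']
  intro sF gF hsum i hi
  have hev := congrFun hsum (dM (FD T c hc h1 h2 E g i))
  rw [Finset.sum_apply] at hev
  rw [Finset.sum_eq_single_of_mem i hi] at hev
  · rw [Pi.smul_apply, uu_marker T c hc h1 h2 E g, if_pos rfl, smul_eq_mul, mul_one] at hev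
    exact hev
  · intro b _ hbi
    rw [Pi.smul_apply, uu_marker T c hc h1 h2 E g, if_neg hbi, smul_eq_mul, mul_zero]

end Construction4

lemma exists_req (E : ℕ ≃ ℕ × ℕ × ℕ × ℕ) (s m d bound : ℕ) :
    ∃ k, bound ≤ k ∧ rS E k = s ∧ rM E k = m ∧ rD E k = d := by
  classical
  set kf : ℕ → ℕ := fun r => E.symm (r, s, m, d) with hkf
  have hinj : Function.Injective kf := by
    intro a b hab
    have h := congrArg E hab
    simp only [hkf, Equiv.apply_symm_apply, Prod.mk.injEq] at h
    exact h.1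
  have hex : ∃ r, r < bound + 1 ∧ bound ≤ kf r := by
    by_contra hno
    push_neg at hno
    have hmap : ∀ r ∈ Finset.range (bound+1), kf r ∈ Finset.range bound := by
      intro r hr
      exact Finset.mem_range.mpr (hno r (Finset.mem_range.mp hr))
    obtain ⟨r1, hr1, r2, hr2, hne, heq⟩ :=
      Finset.exists_ne_map_eq_of_card_lt_of_maps_to (by simp) hmap
    exact hne (hinj heq)
  obtain ⟨r, _, hbk⟩ := hex
  refine ⟨kf r, hbk, ?_, ?_, ?_⟩ <;>
    simp [rS, rM, rD, hkf, Equiv.apply_symm_apply]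

end HCAux

/-- If `T` is a continuous linear operator on `ω = 𝕜^ℕ` whose matrix has rows of lengths
`c i` (i.e. `c i` is the least index beyond which the `i`-th row vanishes) with
`c i > i + 1` for every `i` and `c` injective, then `T` has a hypercyclic subspace. -/
theorem hypercyclic_subspace_of_row_lengths {𝕜 : Type*} [RCLike 𝕜]
    (T : (ℕ → 𝕜) →L[𝕜] (ℕ → 𝕜)) (c : ℕ → ℕ)
    (hc : ∀ i, IsLeast {m : ℕ | ∀ j, m ≤ j → T (Pi.single j 1) i = 0} (c i))
    (h1 : ∀ i, i + 1 < c i) (h2 : Function.Injective c) :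
    ∃ M : Submodule 𝕜 (ℕ → 𝕜), IsClosed (M : Set (ℕ → 𝕜)) ∧ ¬ Module.Finite 𝕜 M ∧
      ∀ x ∈ M, x ≠ 0 → Dense (Set.range fun n : ℕ => (T ^ n) x) := by
  classical
  open HCAux in
  set E : ℕ ≃ ℕ × ℕ × ℕ × ℕ := (Denumerable.eqv (ℕ × ℕ × ℕ × ℕ)).symm with hE
  set g : ℕ → (ℕ → 𝕜) := TopologicalSpace.denseSeq (ℕ → 𝕜) with hgdef
  have hg : DenseRange g := TopologicalSpace.denseRange_denseSeq _
  refine ⟨Msub T c hc h1 h2 E g, Msub_closed T c hc h1 h2 E g, ?_, ?_⟩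
  · -- not finite dimensional
    intro hfin
    have hrank : Module.rank 𝕜 (Msub T c hc h1 h2 E g) < Cardinal.aleph0 :=
      Module.rank_lt_aleph0 𝕜 _
    have hind : LinearIndependent 𝕜
        (fun t : ℕ => (⟨uu T c hc h1 h2 E g t, uu_mem T c hc h1 h2 E g t⟩ : Msub T c hc h1 h2 E g)) := by
      apply LinearIndependent.of_comp (Msub T c hc h1 h2 E g).subtype
      have : ((Msub T c hc h1 h2 E g).subtype ∘ fun t : ℕ =>
          (⟨uu T c hc h1 h2 E g t, uu_mem T c hc h1 h2 E g t⟩ : Msub T c hc h1 h2 E g)) = fun t => uu T c hc h1 h2 E g t := rfl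
      rw [this]
      exact uu_indep T c hc h1 h2 E g
    exact absurd hrank (not_lt.mpr hind.aleph0_le_rank)
  · -- hypercyclicity
    intro x hxM hx0
    set α : ℕ → 𝕜 := fun t => x (dM (FD T c hc h1 h2 E g t)) with hα
    have hxPhi : x = PhiFun T c hc h1 h2 E g α := mem_Phi T c hc h1 h2 E g hxM
    have hαne : ∃ s, α s ≠ 0 := by
      by_contra h
      push_neg at h
      apply hx0
      rw [hxPhi]
      funext jj
      simp only [PhiFun]
      rw [Finset.sum_eq_zero]
      · rfl
      · intro t _
        rw [h t, zero_mul]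
    obtain ⟨s, hs⟩ := hαne
    rw [dense_iff_inter_open]
    intro U hU hUne
    obtain ⟨z, hz⟩ := hUne
    obtain ⟨I, u, hIu, hsub⟩ := isOpen_pi_iff.mp hU z hz
    have hball : ∀ i ∈ I, ∃ ε : ℝ, 0 < ε ∧ Metric.ball (z i) ε ⊆ u i := by
      intro i hi
      obtain ⟨ho, hzi⟩ := hIu i hi
      exact Metric.isOpen_iff.mp ho (z i) hzi
    choose! εf hεpos hεsub using hball
    set m := I.sup id + 1 with hm
    have hIm : ∀ i ∈ I, i < m := by
      intro i hi
      have : id i ≤ I.sup id := Finset.le_sup hi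
      simp only [id] at this
      omega
    set W : Set (ℕ → 𝕜) :=
      {w | ∀ i ∈ I, ‖w i - (α s)⁻¹ * z i‖ < εf i / (‖α s‖ + 1)} with hW
    have hWopen : IsOpen W := by
      have hWeq : W = ⋂ i ∈ (I : Set ℕ),
          {w : ℕ → 𝕜 | ‖w i - (α s)⁻¹ * z i‖ < εf i / (‖α s‖ + 1)} := by
        ext w
        simp [hW]
      rw [hWeq]
      apply Set.Finite.isOpen_biInter I.finite_toSet
      intro i _
      exact isOpen_lt (((continuous_apply i).sub continuous_const).norm) continuous_const
    have hWne : W.Nonempty := by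
      refine ⟨fun i => (α s)⁻¹ * z i, ?_⟩
      intro i hi
      simp only [Set.mem_setOf_eq, sub_self, norm_zero]
      exact div_pos (hεpos i hi) (by positivity)
    obtain ⟨dI, hdI⟩ := hg.exists_mem_open hWopen hWne
    obtain ⟨k, hks, hkS, hkM, hkD⟩ := exists_req E s m dI s
    set N := dN (FD T c hc h1 h2 E g k) with hN
    refine ⟨(T ^ N) x, ?_, ⟨N, rfl⟩⟩
    apply hsub
    intro i hiI
    rw [Finset.mem_coe] at hiI
    have him : i < rM E k := by rw [hkM]; exact hIm i hiI
    set b := opBnd (T ^ N) (rM E k) with hb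
    set r := max b (s+1) with hr
    have heval : (T ^ N) x i = α s * rQ E g k i := by
      have hagree : ∀ j, j < b →
          x j = (∑ t ∈ Finset.range r, α t • uu T c hc h1 h2 E g t) j := by
        intro j hj
        rw [Finset.sum_apply]
        have hrb : j + 1 ≤ r := by
          have : b ≤ r := le_max_left _ _
          omega
        calc x j = PhiFun T c hc h1 h2 E g α j := by rw [← hxPhi]
          _ = ∑ t ∈ Finset.range r, α t * uu T c hc h1 h2 E g t j := Phi_ext T c hc h1 h2 E g α hrb
          _ = ∑ t ∈ Finset.range r, (α t • uu T c hc h1 h2 E g t) j := by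
              apply Finset.sum_congr rfl
              intro t _
              rw [Pi.smul_apply, smul_eq_mul]
      have h1' : (T ^ N) x i
          = (T ^ N) (∑ t ∈ Finset.range r, α t • uu T c hc h1 h2 E g t) i :=
        opBnd_spec _ him hagree
      rw [h1', map_sum, Finset.sum_apply]
      have hterm : ∀ t ∈ Finset.range r,
          ((T ^ N) (α t • uu T c hc h1 h2 E g t)) i
            = α t * (if t ≤ k ∧ t = rS E k then rQ E g k i else 0) := by
        intro t _
        rw [map_smul, Pi.smul_apply, smul_eq_mul, Tpow_uu T c hc h1 h2 E g him]
      rw [Finset.sum_congr rfl hterm]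
      rw [Finset.sum_eq_single_of_mem s (Finset.mem_range.mpr (by
        have : s + 1 ≤ r := le_max_right _ _
        omega))]
      · rw [if_pos ⟨hks, hkS.symm⟩]
      · intro t _ hts
        rw [if_neg, mul_zero]
        intro hcontra
        exact hts (hcontra.2.trans hkS)
    apply hεsub i hiI
    rw [Metric.mem_ball, dist_eq_norm, heval]
    have hrq : rQ E g k = g dI := by rw [rQ, hkD]
    rw [hrq]
    have hfs : α s * g dI i - z i = α s * (g dI i - (α s)⁻¹ * z i) := by
      field_simp
    rw [hfs, norm_mul]
    have hq : ‖g dI i - (α s)⁻¹ * z i‖ < εf i / (‖α s‖ + 1) := hdI i hiI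
    have hpos : 0 < ‖α s‖ := norm_pos_iff.mpr hs
    have hεi : 0 < εf i := hεpos i hiI
    calc ‖α s‖ * ‖g dI i - (α s)⁻¹ * z i‖
        ≤ ‖α s‖ * (εf i / (‖α s‖ + 1)) :=
          mul_le_mul_of_nonneg_left (le_of_lt hq) (norm_nonneg _)
      _ = εf i * (‖α s‖ / (‖α s‖ + 1)) := by ring
      _ < εf i * 1 := by
          apply mul_lt_mul_of_pos_left _ hεi
          rw [div_lt_one (by linarith)]
          linarith
      _ = εf i := mul_one _
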